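/- The Schubert polynomials satisfy the Nadeau-Spink-Tewari recursion: for every permutation w, 𝔖_w = R_1(𝔖_w) + Σ_{k ∈ Des(w)} x_k · R_{k+1}(𝔖_{w s_k}), where Des(w) = {k : w(k) > w(k+1)} and R_k are the Bergeron-Sottile operators. -/

import Mathlib

open MvPolynomial

/-- The Bergeron–Sottile operator `R_k` on the polynomial ring `ℤ[x_1, x_2, …]`. -/
noncomputable def Rop (k : ℕ+) : MvPolynomial ℕ+ ℤ →ₐ[ℤ] MvPolynomial ℕ+ ℤ :=
  aeval fun i => if i < k then X i else if i = k then 0 else X (i - 1)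

lemma Rop_X (k i : ℕ+) :
    Rop k (X i) = if i < k then X i else if i = k then 0 else X (i - 1) := by
  simp [Rop]

lemma Rop_X_of_lt {k i : ℕ+} (h : i < k) : Rop k (X i) = X i := by
  simp [Rop_X, h]

lemma Rop_X_self (k : ℕ+) : Rop k (X k) = 0 := by
  simp [Rop_X]

lemma Rop_X_of_gt {k i : ℕ+} (h : k < i) : Rop k (X i) = X (i - 1) := by
  rw [Rop_X, if_neg (not_lt_of_gt h), if_neg h.ne']

lemma pnat_succ_sub_one (k : ℕ+) : k + 1 - 1 = k := by
  apply PNat.coe_injective; rw [PNat.sub_coe]; simp [PNat.lt_add_one_iff]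

lemma pnat_lt_succ (k : ℕ+) : k < k + 1 := PNat.lt_add_one_iff.mpr le_rfl

/-- `R_k = R_{k+1} ∘ s_k`. -/
lemma Rop_comp_swap (k : ℕ+) (f : MvPolynomial ℕ+ ℤ) :
    Rop (k + 1) (rename (Equiv.swap k (k + 1)) f) = Rop k f := by
  have h : (Rop (k + 1)).comp (rename (Equiv.swap k (k + 1))) = Rop k := by
    apply algHom_ext
    intro i
    simp only [AlgHom.comp_apply, rename_X]
    rcases lt_trichotomy i k with h | h | h
    · rw [Equiv.swap_apply_of_ne_of_ne h.ne (h.trans (pnat_lt_succ k)).ne,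
        Rop_X_of_lt (h.trans (pnat_lt_succ k)), Rop_X_of_lt h]
    · subst h
      rw [Equiv.swap_apply_left, Rop_X_self, Rop_X_self]
    · rcases eq_or_lt_of_le (PNat.add_one_le_iff.mpr h) with h2 | h2
      · subst h2
        rw [Equiv.swap_apply_right, Rop_X_of_lt (pnat_lt_succ k),
          Rop_X_of_gt (pnat_lt_succ k), pnat_succ_sub_one]
      · rw [Equiv.swap_apply_of_ne_of_ne (h.ne') (h2.ne'), Rop_X_of_gt h2, Rop_X_of_gt h]
  exact DFunLike.congr_fun h f

/-- `R_{m+1}` commutes with `s_k` when `k + 1 ≤ m`. -/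
lemma Rop_comm_swap {k m : ℕ+} (hkm : k + 1 ≤ m) (f : MvPolynomial ℕ+ ℤ) :
    Rop (m + 1) (rename (Equiv.swap k (k + 1)) f)
      = rename (Equiv.swap k (k + 1)) (Rop (m + 1) f) := by
  have h : (Rop (m + 1)).comp (rename (Equiv.swap k (k + 1)))
      = (rename (Equiv.swap k (k + 1))).comp (Rop (m + 1)) := by
    apply algHom_ext
    intro i
    simp only [AlgHom.comp_apply, rename_X]
    have hk1m : (k : ℕ) + 1 ≤ (m : ℕ) := by exact_mod_cast hkm
    rcases lt_trichotomy i (m + 1) with h | h | h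
    · rw [Rop_X_of_lt h, rename_X]
      have hσ : Equiv.swap k (k + 1) i < m + 1 := by
        rcases eq_or_ne i k with rfl | h1
        · rw [Equiv.swap_apply_left]
          rw [← PNat.coe_lt_coe] at h ⊢; push_cast at h ⊢; omega
        rcases eq_or_ne i (k + 1) with rfl | h2
        · rw [Equiv.swap_apply_right]
          exact lt_trans (pnat_lt_succ k) h
        · rw [Equiv.swap_apply_of_ne_of_ne h1 h2]; exact h
      rw [Rop_X_of_lt hσ]
    · subst h
      have h1 : m + 1 ≠ k := by
        intro h; rw [← h] at hkm
        have := lt_of_lt_of_le (pnat_lt_succ (m + 1)) (hkm.trans (le_of_lt (pnat_lt_succ m)))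
        exact absurd this (lt_irrefl _)
      have h2 : m + 1 ≠ k + 1 := by
        intro h
        rw [← PNat.coe_inj] at h; push_cast at h; omega
      rw [Equiv.swap_apply_of_ne_of_ne h1 h2, Rop_X_self, map_zero]
    · have h1 : i ≠ k := by
        rw [← PNat.coe_lt_coe] at h; rw [← PNat.coe_inj.ne]; push_cast at h ⊢; omega
      have h2 : i ≠ k + 1 := by
        rw [← PNat.coe_lt_coe] at h; rw [← PNat.coe_inj.ne]; push_cast at h ⊢; omega
      rw [Equiv.swap_apply_of_ne_of_ne h1 h2, Rop_X_of_gt h, rename_X]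
      have h3 : (1:ℕ) < i := by
        rw [← PNat.coe_lt_coe] at h; push_cast at h; omega
      have h4 : i - 1 ≠ k := by
        rw [← PNat.coe_inj.ne, PNat.sub_coe, if_pos (by exact_mod_cast h3)]
        rw [← PNat.coe_lt_coe] at h; push_cast at h ⊢; omega
      have h5 : i - 1 ≠ k + 1 := by
        rw [← PNat.coe_inj.ne, PNat.sub_coe, if_pos (by exact_mod_cast h3)]
        rw [← PNat.coe_lt_coe] at h; push_cast at h ⊢; omega
      rw [Equiv.swap_apply_of_ne_of_ne h4 h5]
  exact DFunLike.congr_fun h f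

lemma X_sub_X_ne_zero (k : ℕ+) : (X k - X (k + 1) : MvPolynomial ℕ+ ℤ) ≠ 0 := by
  rw [sub_ne_zero]
  exact fun h => (pnat_lt_succ k).ne (X_injective h)

section Main

variable (S : Equiv.Perm ℕ+ → MvPolynomial ℕ+ ℤ)
variable (hdd : ∀ (w : Equiv.Perm ℕ+) (k : ℕ+), w (k + 1) < w k →
      S w - rename (Equiv.swap k (k + 1)) (S w) =
        (X k - X (k + 1)) * S (w * Equiv.swap k (k + 1)))

include hdd

/-- If `k` is an ascent of `w`, then `S w` is symmetric in `x_k, x_{k+1}`. -/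
lemma symm_of_ascent (w : Equiv.Perm ℕ+) (k : ℕ+) (h : w k < w (k + 1)) :
    rename (Equiv.swap k (k + 1)) (S w) = S w := by
  set σ := Equiv.swap k (k + 1) with hσ
  have hd : (w * σ) (k + 1) < (w * σ) k := by
    simpa [σ, Equiv.Perm.mul_apply, Equiv.swap_apply_left, Equiv.swap_apply_right] using h
  have h1 := hdd (w * σ) k hd
  have hσσ : w * σ * σ = w := by
    rw [mul_assoc, hσ, Equiv.swap_mul_self, mul_one]
  rw [hσσ] at h1
  have h2 := congrArg (rename σ) h1
  rw [map_sub, map_mul, map_sub, rename_X, rename_X] at h2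
  rw [show σ k = k + 1 from Equiv.swap_apply_left k (k+1),
    show σ (k + 1) = k from Equiv.swap_apply_right k (k+1)] at h2
  have hid : rename ⇑σ (rename ⇑σ (S (w * σ))) = S (w * σ) := by
    rw [rename_rename]
    have : ⇑σ ∘ ⇑σ = id := by funext x; simp [σ]
    rw [this, rename_id, AlgHom.id_apply]
  rw [hid] at h2
  have hkey : (X k - X (k + 1)) * (S w - rename ⇑σ (S w)) = 0 := by
    linear_combination -h1 - h2
  rcases mul_eq_zero.mp hkey with h | h
  · exact absurd h (X_sub_X_ne_zero k)
  · rw [sub_eq_zero] at h; exact h.symm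

/-- The descent term. -/
lemma descent_term (w : Equiv.Perm ℕ+) (k : ℕ+) (h : w (k + 1) < w k) :
    X k * Rop (k + 1) (S (w * Equiv.swap k (k + 1)))
      = Rop (k + 1) (S w) - Rop k (S w) := by
  have h1 := congrArg (Rop (k + 1)) (hdd w k h)
  rw [map_sub, map_mul, map_sub, Rop_X_of_lt (pnat_lt_succ k), Rop_X_self, sub_zero,
    Rop_comp_swap] at h1
  exact h1.symm

end Main

/-- Number of non-inversions of `w` inside `[1, n]`. -/
def ninv (n : ℕ+) (w : Equiv.Perm ℕ+) : ℕ :=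
  (((Finset.Icc (1 : ℕ+) n) ×ˢ (Finset.Icc (1 : ℕ+) n)).filter
    (fun p => p.1 < p.2 ∧ w p.1 < w p.2)).card

lemma ninv_lt (n : ℕ+) (w : Equiv.Perm ℕ+) {k : ℕ+} (hk : k + 1 ≤ n)
    (ha : w k < w (k + 1)) :
    ninv n (w * Equiv.swap k (k + 1)) < ninv n w := by
  classical
  have hcoe : ((k + 1 : ℕ+) : ℕ) = (k : ℕ) + 1 := by push_cast; ring
  have hs : ∀ x : ℕ+, ((Equiv.swap k (k + 1) x : ℕ+) : ℕ)
      = if (x : ℕ) = (k : ℕ) then (k : ℕ) + 1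
        else if (x : ℕ) = (k : ℕ) + 1 then (k : ℕ) else (x : ℕ) := by
    intro x
    rcases eq_or_ne x k with rfl | h1
    · rw [Equiv.swap_apply_left, if_pos rfl, hcoe]
    rcases eq_or_ne x (k + 1) with rfl | h2
    · rw [Equiv.swap_apply_right, if_neg (by omega), if_pos hcoe]
    · rw [Equiv.swap_apply_of_ne_of_ne h1 h2,
        if_neg (fun h => h1 (PNat.coe_inj.mp h)),
        if_neg (fun h => h2 (PNat.coe_inj.mp (h.trans hcoe.symm)))]
  have hkn : k ≤ n := le_trans (le_of_lt (pnat_lt_succ k)) hk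
  have hkn' : (k : ℕ) + 1 ≤ (n : ℕ) := by
    rw [← hcoe]; exact (PNat.coe_le_coe _ _).mpr hk
  have hmem : (k, k + 1) ∈ ((Finset.Icc (1 : ℕ+) n) ×ˢ (Finset.Icc (1 : ℕ+) n)).filter
      (fun p => p.1 < p.2 ∧ w p.1 < w p.2) := by
    simp only [Finset.mem_filter, Finset.mem_product, Finset.mem_Icc]
    exact ⟨⟨⟨k.one_le, hkn⟩, ⟨(k + 1).one_le, hk⟩⟩, pnat_lt_succ k, ha⟩
  have hmap : ∀ p ∈ ((Finset.Icc (1 : ℕ+) n) ×ˢ (Finset.Icc (1 : ℕ+) n)).filter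
      (fun p => p.1 < p.2 ∧ (w * Equiv.swap k (k + 1)) p.1 < (w * Equiv.swap k (k + 1)) p.2),
      (Equiv.swap k (k + 1) p.1, Equiv.swap k (k + 1) p.2) ∈
        (((Finset.Icc (1 : ℕ+) n) ×ˢ (Finset.Icc (1 : ℕ+) n)).filter
          (fun p => p.1 < p.2 ∧ w p.1 < w p.2)).erase (k, k + 1) := by
    rintro ⟨a, b⟩ hp
    rw [Finset.mem_filter] at hp
    simp only [Finset.mem_filter, Finset.mem_product, Finset.mem_Icc,
      Equiv.Perm.mul_apply] at hp
    obtain ⟨⟨⟨-, han⟩, ⟨-, hbn⟩⟩, hab, hwab⟩ := hp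
    have hne : ¬((a : ℕ) = (k : ℕ) ∧ (b : ℕ) = (k : ℕ) + 1) := by
      rintro ⟨h1, h2⟩
      have ha' : a = k := PNat.coe_inj.mp h1
      have hb' : b = k + 1 := PNat.coe_inj.mp (h2.trans hcoe.symm)
      subst ha'; subst hb'
      rw [Equiv.swap_apply_left, Equiv.swap_apply_right] at hwab
      exact absurd hwab (not_lt_of_gt ha)
    have hab' : (a : ℕ) < (b : ℕ) := hab
    have han' : (a : ℕ) ≤ (n : ℕ) := han
    have hbn' : (b : ℕ) ≤ (n : ℕ) := hbn
    have hσab : Equiv.swap k (k + 1) a < Equiv.swap k (k + 1) b := by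
      rw [← PNat.coe_lt_coe, hs a, hs b]
      split_ifs <;> omega
    refine Finset.mem_erase.mpr ⟨?_, ?_⟩
    · intro h
      rw [Prod.ext_iff] at h
      obtain ⟨h1, h2⟩ := h
      simp only at h1 h2
      have ha1 : a = k + 1 := by
        have := congrArg (Equiv.swap k (k + 1)) h1
        rwa [Equiv.swap_apply_self, Equiv.swap_apply_left] at this
      have hb1 : b = k := by
        have := congrArg (Equiv.swap k (k + 1)) h2
        rwa [Equiv.swap_apply_self, Equiv.swap_apply_right] at this
      rw [ha1, hb1] at hab
      exact absurd hab (not_lt_of_gt (pnat_lt_succ k))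
    · simp only [Finset.mem_filter, Finset.mem_product, Finset.mem_Icc]
      refine ⟨⟨⟨(Equiv.swap k (k + 1) a).one_le, ?_⟩,
        ⟨(Equiv.swap k (k + 1) b).one_le, ?_⟩⟩, hσab, hwab⟩
      · rw [← PNat.coe_le_coe, hs a]; split_ifs <;> omega
      · rw [← PNat.coe_le_coe, hs b]; split_ifs <;> omega
  have hinj : Set.InjOn (fun p : ℕ+ × ℕ+ => (Equiv.swap k (k + 1) p.1, Equiv.swap k (k + 1) p.2))
      (((Finset.Icc (1 : ℕ+) n) ×ˢ (Finset.Icc (1 : ℕ+) n)).filter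
        (fun p => p.1 < p.2 ∧ (w * Equiv.swap k (k + 1)) p.1 < (w * Equiv.swap k (k + 1)) p.2)) := by
    rintro ⟨a, b⟩ - ⟨c, d⟩ - h
    simp only [Prod.mk.injEq] at h
    exact Prod.ext ((Equiv.swap k (k + 1)).injective h.1) ((Equiv.swap k (k + 1)).injective h.2)
  unfold ninv
  calc _ ≤ ((((Finset.Icc (1 : ℕ+) n) ×ˢ (Finset.Icc (1 : ℕ+) n)).filter
        (fun p => p.1 < p.2 ∧ w p.1 < w p.2)).erase (k, k + 1)).card :=
        Finset.card_le_card_of_injOn _ hmap hinj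
    _ < _ := Finset.card_erase_lt_of_mem hmem

/-- Characterization of the longest element. -/
lemma w0_char (n : ℕ+) (w : Equiv.Perm ℕ+) (hw : ∀ i : ℕ+, n < i → w i = i)
    (hdesc : ∀ k : ℕ+, k + 1 ≤ n → w (k + 1) < w k) :
    ∀ i : ℕ+, i ≤ n → ((w i : ℕ) + (i : ℕ) = (n : ℕ) + 1) := by
  have hle : ∀ i : ℕ+, i ≤ n → w i ≤ n := by
    intro i hi
    by_contra hgt
    push_neg at hgt
    have h1 : w (w i) = w i := hw (w i) hgt
    have h2 : w i = i := w.injective h1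
    rw [h2] at hgt
    exact absurd hi (not_le_of_gt hgt)
  have chain : ∀ d : ℕ, ∀ i j : ℕ+, (j : ℕ) = (i : ℕ) + d → j ≤ n →
      (w j : ℕ) + d ≤ (w i : ℕ) := by
    intro d
    induction d with
    | zero =>
      intro i j hj _
      have : j = i := by rw [← PNat.coe_inj]; omega
      subst this; omega
    | succ d ih =>
      intro i j hj hjn
      have h1 : (w j : ℕ) + d ≤ (w (i + 1) : ℕ) := by
        apply ih (i + 1) j _ hjn
        push_cast; omega
      have h2 : w (i + 1) < w i := by
        apply hdesc
        rw [← PNat.coe_le_coe] at hjn ⊢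
        push_cast at hjn ⊢
        omega
      rw [← PNat.coe_lt_coe] at h2
      omega
  intro i hi
  have hi' : (i : ℕ) ≤ (n : ℕ) := (PNat.coe_le_coe _ _).mpr hi
  have hup : (w i : ℕ) + ((i : ℕ) - 1) ≤ (w 1 : ℕ) := by
    apply chain ((i : ℕ) - 1) 1 i
    · have := i.one_le; rw [← PNat.coe_le_coe] at this; push_cast at this ⊢; omega
    · exact hi
  have hlo : (w n : ℕ) + ((n : ℕ) - (i : ℕ)) ≤ (w i : ℕ) := by
    apply chain ((n : ℕ) - (i : ℕ)) i n _ le_rfl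
    omega
  have h1n : (w 1 : ℕ) ≤ (n : ℕ) := (PNat.coe_le_coe _ _).mpr (hle 1 n.one_le)
  have hwn : 1 ≤ (w n : ℕ) := (w n).one_le
  have hi1 : 1 ≤ (i : ℕ) := i.one_le
  omega

/-- `R_{m+1}` fixes `S w` when `w` is supported on `[1, n]` and `n ≤ m`. -/
lemma supp_lemma (S : Equiv.Perm ℕ+ → MvPolynomial ℕ+ ℤ)
    (hbase : ∀ (n : ℕ+) (w : Equiv.Perm ℕ+),
      (∀ i : ℕ+, i ≤ n → ((w i : ℕ) + (i : ℕ) = (n : ℕ) + 1)) →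
      (∀ i : ℕ+, n < i → w i = i) →
      S w = ∏ i ∈ Finset.Icc (1 : ℕ+) n, X i ^ ((n : ℕ) - (i : ℕ)))
    (hdd : ∀ (w : Equiv.Perm ℕ+) (k : ℕ+), w (k + 1) < w k →
      S w - rename (Equiv.swap k (k + 1)) (S w) =
        (X k - X (k + 1)) * S (w * Equiv.swap k (k + 1))) :
    ∀ (N : ℕ) (n : ℕ+) (w : Equiv.Perm ℕ+), (∀ i : ℕ+, n < i → w i = i) →
      ninv n w ≤ N → ∀ m : ℕ+, n ≤ m → Rop (m + 1) (S w) = S w := by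
  intro N
  induction N with
  | zero =>
    intro n w hw hN m hm
    -- no ascent possible (else ninv ≥ 1), so w is the longest element
    have hdesc : ∀ k : ℕ+, k + 1 ≤ n → w (k + 1) < w k := by
      intro k hk
      by_contra hc
      push_neg at hc
      have hne : w k ≠ w (k + 1) := fun h => (pnat_lt_succ k).ne (w.injective h)
      have ha : w k < w (k + 1) := lt_of_le_of_ne hc hne
      have : (k, k + 1) ∈ ((Finset.Icc (1 : ℕ+) n) ×ˢ (Finset.Icc (1 : ℕ+) n)).filter
          (fun p => p.1 < p.2 ∧ w p.1 < w p.2) := by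
        simp only [Finset.mem_filter, Finset.mem_product, Finset.mem_Icc]
        exact ⟨⟨⟨k.one_le, le_trans (le_of_lt (pnat_lt_succ k)) hk⟩, ⟨(k+1).one_le, hk⟩⟩,
          pnat_lt_succ k, ha⟩
      have hpos : 0 < ninv n w := Finset.card_pos.mpr ⟨_, this⟩
      omega
    rw [hbase n w (w0_char n w hw hdesc) hw, map_prod]
    apply Finset.prod_congr rfl
    intro i hi
    rw [Finset.mem_Icc] at hi
    rw [map_pow, Rop_X_of_lt (lt_of_le_of_lt (le_trans hi.2 hm) (pnat_lt_succ m))]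
  | succ N ih =>
    intro n w hw hN m hm
    by_cases hA : ∃ k : ℕ+, k + 1 ≤ n ∧ w k < w (k + 1)
    · obtain ⟨k, hk, hak⟩ := hA
      set σ := Equiv.swap k (k + 1) with hσ
      set w' := w * σ with hw'def
      have hw' : ∀ i : ℕ+, n < i → w' i = i := by
        intro i hi
        have h1 : i ≠ k := by
          rw [← PNat.coe_lt_coe] at hi; rw [← PNat.coe_le_coe] at hk
          rw [← PNat.coe_inj.ne]; push_cast at hk ⊢; omega
        have h2 : i ≠ k + 1 := by
          rw [← PNat.coe_lt_coe] at hi; rw [← PNat.coe_le_coe] at hk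
          rw [← PNat.coe_inj.ne]; push_cast at hk ⊢; omega
        rw [hw'def, Equiv.Perm.mul_apply, hσ, Equiv.swap_apply_of_ne_of_ne h1 h2]
        exact hw i hi
      have hninv : ninv n w' ≤ N := by
        have := ninv_lt n w hk hak
        rw [← hw'def] at this
        omega
      have hmain := ih n w' hw' hninv m hm
      have hd : w' (k + 1) < w' k := by
        simpa [hw'def, σ, Equiv.Perm.mul_apply, Equiv.swap_apply_left,
          Equiv.swap_apply_right] using hak
      have h1 := hdd w' k hd
      have hσσ : w' * σ = w := by
        rw [hw'def, mul_assoc, hσ, Equiv.swap_mul_self, mul_one]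
      rw [hσσ] at h1
      have h2 := congrArg (Rop (m + 1)) h1
      have hkm : k + 1 ≤ m := le_trans hk hm
      have hkm1 : k < m + 1 := lt_trans (lt_of_lt_of_le (pnat_lt_succ k) hk)
        (lt_of_le_of_lt hm (pnat_lt_succ m))
      have hk1m1 : k + 1 < m + 1 := lt_of_le_of_lt hkm (pnat_lt_succ m)
      rw [map_sub, map_mul, map_sub, Rop_X_of_lt hkm1, Rop_X_of_lt hk1m1,
        Rop_comm_swap hkm, hmain] at h2
      rw [h1] at h2
      exact (mul_left_cancel₀ (X_sub_X_ne_zero k) h2).symm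
    · push_neg at hA
      have hdesc : ∀ k : ℕ+, k + 1 ≤ n → w (k + 1) < w k := by
        intro k hk
        have hc := hA k hk
        have hne : w (k + 1) ≠ w k := fun h => (pnat_lt_succ k).ne' (w.injective h)
        exact lt_of_le_of_ne hc hne
      rw [hbase n w (w0_char n w hw hdesc) hw, map_prod]
      apply Finset.prod_congr rfl
      intro i hi
      rw [Finset.mem_Icc] at hi
      rw [map_pow, Rop_X_of_lt (lt_of_le_of_lt (le_trans hi.2 hm) (pnat_lt_succ m))]

/-- Telescoping sum over `Icc 1 n` in `ℕ+`. -/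
lemma pnat_telescope (G : ℕ+ → MvPolynomial ℕ+ ℤ) (n : ℕ+) :
    ∑ k ∈ Finset.Icc (1 : ℕ+) n, (G (k + 1) - G k) = G (n + 1) - G 1 := by
  induction n using PNat.recOn with
  | one => simp
  | succ n ih =>
    have hins : Finset.Icc (1 : ℕ+) (n + 1) = insert (n + 1) (Finset.Icc 1 n) := by
      ext x
      simp only [Finset.mem_Icc, Finset.mem_insert]
      constructor
      · rintro ⟨-, hx⟩
        rcases lt_or_eq_of_le hx with h | h
        · exact Or.inr ⟨x.one_le, PNat.lt_add_one_iff.mp h⟩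
        · exact Or.inl h
      · rintro (rfl | ⟨-, hx⟩)
        · exact ⟨(n + 1).one_le, le_rfl⟩
        · exact ⟨x.one_le, le_trans hx (le_of_lt (pnat_lt_succ n))⟩
    rw [hins, Finset.sum_insert (by simp [Finset.mem_Icc, not_le_of_gt (pnat_lt_succ n)]), ih]
    ring

/-- The Nadeau–Spink–Tewari recursion for Schubert polynomials:
if `𝔖` is the family of Schubert polynomials, characterized by
`𝔖_{w₀} = x_1^{n-1} x_2^{n-2} ⋯ x_{n-1}` for the longest element `w₀ ∈ S_n` and
`∂_k 𝔖_w = 𝔖_{w s_k}` whenever `w(k) > w(k+1)` (stated via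
`𝔖_w - s_k 𝔖_w = (x_k - x_{k+1})·𝔖_{w s_k}`), then for every permutation `w`
(lying in `S_n`, i.e. fixing all `i > n`),
`𝔖_w = R_1(𝔖_w) + Σ_{k ∈ Des(w)} x_k · R_{k+1}(𝔖_{w s_k})`. -/
theorem stmt12 (S : Equiv.Perm ℕ+ → MvPolynomial ℕ+ ℤ)
    (hbase : ∀ (n : ℕ+) (w : Equiv.Perm ℕ+),
      (∀ i : ℕ+, i ≤ n → ((w i : ℕ) + (i : ℕ) = (n : ℕ) + 1)) →
      (∀ i : ℕ+, n < i → w i = i) →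
      S w = ∏ i ∈ Finset.Icc (1 : ℕ+) n, X i ^ ((n : ℕ) - (i : ℕ)))
    (hdd : ∀ (w : Equiv.Perm ℕ+) (k : ℕ+), w (k + 1) < w k →
      S w - rename (Equiv.swap k (k + 1)) (S w) =
        (X k - X (k + 1)) * S (w * Equiv.swap k (k + 1)))
    (w : Equiv.Perm ℕ+) (n : ℕ+) (hw : ∀ i : ℕ+, n < i → w i = i) :
    S w = Rop 1 (S w) +
      ∑ k ∈ Finset.Icc (1 : ℕ+) n,
        if w (k + 1) < w k then X k * Rop (k + 1) (S (w * Equiv.swap k (k + 1)))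
        else 0 := by
  have key : ∀ k ∈ Finset.Icc (1 : ℕ+) n,
      (if w (k + 1) < w k then X k * Rop (k + 1) (S (w * Equiv.swap k (k + 1))) else 0)
        = Rop (k + 1) (S w) - Rop k (S w) := by
    intro k _
    by_cases hd : w (k + 1) < w k
    · rw [if_pos hd]
      exact descent_term S hdd w k hd
    · rw [if_neg hd]
      have hne : w k ≠ w (k + 1) := fun h => (pnat_lt_succ k).ne (w.injective h)
      have hak : w k < w (k + 1) := lt_of_le_of_ne (not_lt.mp hd) hne
      have hsym := symm_of_ascent S hdd w k hak
      rw [eq_comm, sub_eq_zero]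
      conv_rhs => rw [← Rop_comp_swap k (S w)]
      rw [hsym]
  rw [Finset.sum_congr rfl key, pnat_telescope (fun k => Rop k (S w)) n]
  have hfix := supp_lemma S hbase hdd (ninv n w) n w hw le_rfl n le_rfl
  rw [hfix]
  ring
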